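/- Let (G,f) be an n-ary group. Every strictly ascending chain of n-ary subgroups of G terminates at a finite step if and only if the set of values of every fuzzy n-ary subgroup of G is a well-ordered subset of [0,1] (with respect to the usual order, i.e. every nonempty subset of Im(μ) has a least element; equivalently, Im(μ) contains no infinite strictly decreasing sequence). -/

import Mathlib

open Classical

variable {G : Type*}

/-- The composition appearing in the (i,j)-associativity law: apply `f` to the
sequence `x : Fin (2n-1) → G` with an inner application of `f` starting at position `i`. -/
def nAryComp {n : ℕ} (f : (Fin n → G) → G) (i : Fin n) (x : Fin (2 * n - 1) → G) : G :=
  f (fun k => if (k : ℕ) < (i : ℕ) then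
        x ⟨(k : ℕ), by have hk := k.isLt; omega⟩
      else if (k : ℕ) = (i : ℕ) then
        f (fun m => x ⟨(i : ℕ) + (m : ℕ), by have hi := i.isLt; have hm := m.isLt; omega⟩)
      else x ⟨(k : ℕ) + n - 1, by have hk := k.isLt; omega⟩)

/-- `(G, f)` is an `n`-ary group: `f` is associative and all equations are uniquely solvable. -/
structure IsNAryGroup (n : ℕ) (f : (Fin n → G) → G) : Prop where
  assoc : ∀ (i j : Fin n) (x : Fin (2 * n - 1) → G), nAryComp f i x = nAryComp f j x
  solv : ∀ (i : Fin n) (x : Fin n → G) (x₀ : G), ∃! z : G, f (Function.update x i z) = x₀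

/-- `y` is the skew element of `x`: `f(x,...,x,y) = x` with `x` repeated `n-1` times. -/
def IsSkew {n : ℕ} (f : (Fin n → G) → G) (x y : G) : Prop :=
  f (fun k => if (k : ℕ) = n - 1 then y else x) = x

/-- `H` is an `n`-ary subgroup of `(G,f)`. -/
def IsNArySubgroup {n : ℕ} (f : (Fin n → G) → G) (H : Set G) : Prop :=
  H.Nonempty ∧ (∀ x : Fin n → G, (∀ i, x i ∈ H) → f x ∈ H) ∧
    ∀ x y : G, x ∈ H → IsSkew f x y → y ∈ H

/-- `μ` is a fuzzy `n`-ary subgroup of `(G,f)`. -/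
def IsFuzzyNArySubgroup {n : ℕ} (f : (Fin n → G) → G) (μ : G → ℝ) : Prop :=
  (∀ x : Fin n → G, (⨅ i, μ (x i)) ≤ μ (f x)) ∧
    ∀ x y : G, IsSkew f x y → μ x ≤ μ y

/-- Every strictly ascending chain of `n`-ary subgroups of `(G,f)` terminates at a finite
step iff the set of values of every fuzzy `n`-ary subgroup of `G` is a well-ordered subset
of `[0,1]` (every nonempty subset of the image has a least element). -/
theorem stmt16 [Nonempty G] {n : ℕ} (hn : 2 ≤ n)
    (f : (Fin n → G) → G) (hf : IsNAryGroup n f) :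
    (¬ ∃ S : ℕ → Set G, (∀ k, IsNArySubgroup f (S k)) ∧ ∀ k, S k ⊂ S (k + 1)) ↔
      ∀ μ : G → ℝ, (∀ x, μ x ∈ Set.Icc (0 : ℝ) 1) → IsFuzzyNArySubgroup f μ →
        ∀ T ⊆ Set.range μ, T.Nonempty → ∃ a ∈ T, ∀ b ∈ T, a ≤ b := by
  classical
  haveI : Nonempty (Fin n) := ⟨⟨0, by omega⟩⟩
  constructor
  · -- chain condition → well-ordered images
    intro hchain μ hμIcc hμ T hTsub hTne
    by_contra hno
    push_neg at hno
    -- hno : ∀ a ∈ T, ∃ b ∈ T, b < a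
    choose g hg1 hg2 using hno
    obtain ⟨a0, ha0⟩ := hTne
    let t : ℕ → {a : ℝ // a ∈ T} :=
      Nat.rec ⟨a0, ha0⟩ (fun _ p => ⟨g p.1 p.2, hg1 p.1 p.2⟩)
    have htlt : ∀ k, ((t (k + 1)).1 : ℝ) < (t k).1 := by
      intro k
      exact hg2 (t k).1 (t k).2
    apply hchain
    refine ⟨fun k => {x | (t k).1 ≤ μ x}, fun k => ?_, fun k => ?_⟩
    · -- level set is a subgroup
      obtain ⟨x, hx⟩ := hTsub (t k).2
      refine ⟨⟨x, by simp [Set.mem_setOf_eq, hx]⟩, fun x hx => ?_, fun x y hx hsk => ?_⟩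
      · exact le_trans (le_ciInf fun i => hx i) (hμ.1 x)
      · exact le_trans hx (hμ.2 x y hsk)
    · have hsub : {x | (t k).1 ≤ μ x} ⊆ {x | (t (k + 1)).1 ≤ μ x} :=
        fun x hx => le_trans (le_of_lt (htlt k)) hx
      rw [Set.ssubset_iff_of_subset hsub]
      obtain ⟨x, hx⟩ := hTsub (t (k + 1)).2
      exact ⟨x, by simp [Set.mem_setOf_eq, hx], by simpa [Set.mem_setOf_eq, hx, not_le] using htlt k⟩
  · -- well-ordered images → chain condition
    intro hwo
    rintro ⟨S, hS, hSS⟩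
    have hmono : ∀ {j k : ℕ}, j ≤ k → S j ⊆ S k := by
      intro j k hjk
      exact monotone_nat_of_le_succ (fun m => (hSS m).1) hjk
    set μ : G → ℝ := fun x => if h : ∃ k, x ∈ S k then 1 / (Nat.find h + 1) else 0 with hμdef
    have hμ0 : ∀ x, 0 ≤ μ x := by
      intro x
      simp only [hμdef]
      split
      · positivity
      · exact le_refl 0
    have hμmem : ∀ x (h : ∃ k, x ∈ S k), μ x = 1 / (Nat.find h + 1) := by
      intro x h; simp only [hμdef, dif_pos h]
    have hμle : ∀ x (k : ℕ), x ∈ S k → 1 / ((k : ℝ) + 1) ≤ μ x := by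
      intro x k hx
      have h : ∃ j, x ∈ S j := ⟨k, hx⟩
      rw [hμmem x h]
      have hfind : Nat.find h ≤ k := Nat.find_le hx
      apply one_div_le_one_div_of_le
      · positivity
      · have : (Nat.find h : ℝ) ≤ k := by exact_mod_cast hfind
        linarith
    have hIcc : ∀ x, μ x ∈ Set.Icc (0 : ℝ) 1 := by
      intro x
      refine ⟨hμ0 x, ?_⟩
      simp only [hμdef]
      split
      · rw [div_le_one (by positivity)]
        have : (0 : ℝ) ≤ (Nat.find ‹∃ k, x ∈ S k› : ℝ) := Nat.cast_nonneg _
        linarith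
      · norm_num
    have hfuzzy : IsFuzzyNArySubgroup f μ := by
      constructor
      · intro x
        by_cases hall : ∀ i, ∃ k, x i ∈ S k
        · set m : Fin n → ℕ := fun i => Nat.find (hall i) with hmdef
          set M : ℕ := Finset.univ.sup m with hMdef
          have hxM : ∀ i, x i ∈ S M := fun i =>
            hmono (Finset.le_sup (Finset.mem_univ i)) (Nat.find_spec (hall i))
          have hfx : f x ∈ S M := (hS M).2.1 x hxM
          obtain ⟨i₀, _, hi₀⟩ := Finset.exists_mem_eq_sup Finset.univ
            (Finset.univ_nonempty) m
          have hbdd : BddBelow (Set.range fun i => μ (x i)) :=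
            ⟨0, by rintro r ⟨i, rfl⟩; exact hμ0 _⟩
          refine le_trans (ciInf_le hbdd i₀) ?_
          rw [hμmem (x i₀) (hall i₀)]
          have : Nat.find (hall i₀) = M := hi₀.symm
          rw [this]
          exact hμle (f x) M hfx
        · push_neg at hall
          obtain ⟨i, hi⟩ := hall
          have hbdd : BddBelow (Set.range fun i => μ (x i)) :=
            ⟨0, by rintro r ⟨i, rfl⟩; exact hμ0 _⟩
          refine le_trans (ciInf_le hbdd i) ?_
          have : μ (x i) = 0 := by simp only [hμdef, dif_neg (not_exists.mpr hi)]
          rw [this]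
          exact hμ0 _
      · intro x y hsk
        by_cases hx : ∃ k, x ∈ S k
        · have hy : y ∈ S (Nat.find hx) := (hS _).2.2 x y (Nat.find_spec hx) hsk
          rw [hμmem x hx]
          exact hμle y (Nat.find hx) hy
        · have : μ x = 0 := by simp only [hμdef, dif_neg hx]
          rw [this]; exact hμ0 y
    -- extract elements of the strict differences
    have hc : ∀ k : ℕ, ∃ x, x ∈ S (k + 1) ∧ x ∉ S k := by
      intro k
      obtain ⟨x, hx1, hx2⟩ := (Set.ssubset_iff_of_subset (hSS k).1).mp (hSS k)
      exact ⟨x, hx1, hx2⟩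
    choose c hc1 hc2 using hc
    have hμc : ∀ k, μ (c k) = 1 / ((k : ℝ) + 2) := by
      intro k
      have h : ∃ j, c k ∈ S j := ⟨k + 1, hc1 k⟩
      have hfind : Nat.find h = k + 1 := by
        have h1 : Nat.find h ≤ k + 1 := Nat.find_le (hc1 k)
        have h2 : k < Nat.find h := by
          by_contra hcon
          push_neg at hcon
          exact hc2 k (hmono hcon (Nat.find_spec h))
        omega
      rw [hμmem (c k) h, hfind]
      push_cast
      ring_nf
    set T : Set ℝ := Set.range (fun k : ℕ => (1 : ℝ) / (k + 2)) with hTdef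
    have hTsub : T ⊆ Set.range μ := by
      rintro r ⟨k, rfl⟩
      exact ⟨c k, hμc k⟩
    obtain ⟨a, haT, hleast⟩ := hwo μ hIcc hfuzzy T hTsub ⟨1 / 2, 0, by norm_num⟩
    obtain ⟨k, rfl⟩ := haT
    have hb : (1 : ℝ) / ((k : ℝ) + 3) ∈ T := ⟨k + 1, by push_cast; ring_nf⟩
    have := hleast _ hb
    have hlt : (1 : ℝ) / ((k : ℝ) + 3) < 1 / ((k : ℝ) + 2) := by
      apply one_div_lt_one_div_of_lt <;> [positivity; linarith]
    linarith
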